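/- Let k ≥ 1 be a natural number and let r be a real number with 0 < r < 1. Then the quantity U(k,r) = (r/k) · ∏_{i=1}^{k-1} (1 + r/i) satisfies 0 < U(k,r) ≤ (r + r²)/k^{1-r}. -/

import Mathlib

lemma harm_le_log (m : ℕ) (hm : 1 ≤ m) :
    ∑ i ∈ Finset.Icc 2 m, (1 / (i : ℝ)) ≤ Real.log m := by
  induction m, hm using Nat.le_induction with
  | base => simp
  | succ n hn ih =>
    rw [Finset.sum_Icc_succ_top (by omega)]
    have hn0 : (0:ℝ) < n := by exact_mod_cast hn
    have hn1 : (0:ℝ) < (n:ℝ) + 1 := by linarith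
    have key : Real.log n + 1 / ((n:ℝ) + 1) ≤ Real.log ((n:ℝ) + 1) := by
      have h := Real.log_le_sub_one_of_pos (x := (n:ℝ) / ((n:ℝ)+1)) (by positivity)
      rw [Real.log_div (ne_of_gt hn0) (ne_of_gt hn1)] at h
      have : (n:ℝ) / ((n:ℝ)+1) - 1 = -(1 / ((n:ℝ)+1)) := by field_simp; ring
      rw [this] at h
      linarith
    push_cast
    linarith [ih]

lemma prod_le (r : ℝ) (hr0 : 0 < r) (m : ℕ) (hm : 1 ≤ m) :
    ∏ i ∈ Finset.Icc 1 m, (1 + r / (i : ℝ)) ≤ (1 + r) * (m : ℝ) ^ r := by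
  have hsplit : Finset.Icc 1 m = insert 1 (Finset.Icc 2 m) := by
    ext x; simp [Finset.mem_Icc, Finset.mem_insert]; omega
  rw [hsplit, Finset.prod_insert (by simp)]
  push_cast
  rw [div_one]
  have hstep : ∏ i ∈ Finset.Icc 2 m, (1 + r / (i : ℝ)) ≤ (m : ℝ) ^ r := by
    have hle : ∏ i ∈ Finset.Icc 2 m, (1 + r / (i : ℝ)) ≤
        ∏ i ∈ Finset.Icc 2 m, Real.exp (r / (i : ℝ)) := by
      apply Finset.prod_le_prod
      · intro i hi
        have hi2 : 2 ≤ i := (Finset.mem_Icc.mp hi).1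
        have : (0:ℝ) < i := by exact_mod_cast Nat.lt_of_lt_of_le (by norm_num) hi2
        positivity
      · intro i hi
        have := Real.add_one_le_exp (r / (i : ℝ))
        linarith
    rw [← Real.exp_sum] at hle
    refine hle.trans ?_
    have hsum : ∑ i ∈ Finset.Icc 2 m, (r / (i : ℝ)) =
        r * ∑ i ∈ Finset.Icc 2 m, (1 / (i : ℝ)) := by
      rw [Finset.mul_sum]; congr 1; ext i; ring
    rw [hsum]
    have hlog := harm_le_log m hm
    have hm0 : (0:ℝ) < m := by exact_mod_cast hm
    rw [Real.rpow_def_of_pos hm0]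
    apply Real.exp_le_exp.mpr
    have : r * ∑ i ∈ Finset.Icc 2 m, (1 / (i : ℝ)) ≤ r * Real.log m :=
      mul_le_mul_of_nonneg_left hlog (le_of_lt hr0)
    linarith [this]
  have hpos : (0:ℝ) < 1 + r := by linarith
  calc (1 + r) * ∏ i ∈ Finset.Icc 2 m, (1 + r / (i : ℝ))
      ≤ (1 + r) * (m : ℝ) ^ r := by
        exact mul_le_mul_of_nonneg_left hstep (le_of_lt hpos)

/-- For `k ≥ 1` optimization cycles and supply forecast error rate `0 < r < 1`,
the underdelivery fraction `U(k,r) = (r/k) · ∏_{i=1}^{k-1} (1 + r/i)` is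
positive and bounded above by `(r + r²)/k^(1-r)`. -/
theorem underdelivery_bound_pos_error (k : ℕ) (hk : 1 ≤ k) (r : ℝ)
    (hr0 : 0 < r) (hr1 : r < 1) :
    0 < (r / (k : ℝ)) * ∏ i ∈ Finset.Icc 1 (k - 1), (1 + r / (i : ℝ)) ∧
      (r / (k : ℝ)) * ∏ i ∈ Finset.Icc 1 (k - 1), (1 + r / (i : ℝ)) ≤
        (r + r ^ 2) / (k : ℝ) ^ (1 - r) := by
  have hk0 : (0:ℝ) < k := by exact_mod_cast hk
  constructor
  · apply mul_pos (by positivity)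
    apply Finset.prod_pos
    intro i hi
    have hi1 : 1 ≤ i := (Finset.mem_Icc.mp hi).1
    have : (0:ℝ) < i := by exact_mod_cast hi1
    positivity
  · -- rewrite RHS as (r + r^2) * k^(r-1)
    have hrhs : (r + r ^ 2) / (k : ℝ) ^ (1 - r) = (r + r ^ 2) * (k : ℝ) ^ (r - 1) := by
      rw [div_eq_mul_inv, ← Real.rpow_neg (le_of_lt hk0)]
      norm_num
    rw [hrhs]
    have hkr : (k : ℝ) ^ (r - 1) = (k : ℝ) ^ r / k := by
      rw [Real.rpow_sub hk0, Real.rpow_one]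
    rcases Nat.eq_or_lt_of_le hk with h1 | h2
    · -- k = 1
      subst h1
      simp [Real.rpow_sub, hkr]
      nlinarith
    · have hm : 1 ≤ k - 1 := by omega
      have hprod := prod_le r hr0 (k - 1) hm
      have hmk : ((k - 1 : ℕ) : ℝ) ≤ (k : ℝ) := by
        have : (k - 1 : ℕ) ≤ k := Nat.sub_le k 1
        exact_mod_cast this
      have hm0 : (0:ℝ) ≤ ((k-1:ℕ) : ℝ) := by positivity
      have hrp : ((k - 1 : ℕ) : ℝ) ^ r ≤ (k : ℝ) ^ r :=
        Real.rpow_le_rpow hm0 hmk (le_of_lt hr0)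
      have hprod2 : ∏ i ∈ Finset.Icc 1 (k - 1), (1 + r / (i : ℝ)) ≤ (1 + r) * (k : ℝ) ^ r := by
        refine hprod.trans ?_
        exact mul_le_mul_of_nonneg_left hrp (by linarith)
      have hprodnn : (0:ℝ) ≤ ∏ i ∈ Finset.Icc 1 (k - 1), (1 + r / (i : ℝ)) := by
        apply Finset.prod_nonneg
        intro i hi
        have hi1 : 1 ≤ i := (Finset.mem_Icc.mp hi).1
        have : (0:ℝ) < i := by exact_mod_cast hi1
        positivity
      calc (r / (k : ℝ)) * ∏ i ∈ Finset.Icc 1 (k - 1), (1 + r / (i : ℝ))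
          ≤ (r / (k : ℝ)) * ((1 + r) * (k : ℝ) ^ r) :=
            mul_le_mul_of_nonneg_left hprod2 (by positivity)
        _ = (r + r ^ 2) * (k : ℝ) ^ (r - 1) := by
            rw [hkr]; field_simp
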